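/- Let Z be a measurable space, let P be a Markov (probability) transition kernel on Z, and for n ∈ ℕ let Pₙ denote the n-step kernel (the n-fold composition of P), with Pₙf(z) := ∫ f dPₙ(z,·) for measurable f : Z → [0,∞], integrals interpreted in [0,∞]. Let V : Z → [1,∞] be measurable, let α ∈ (0,1), C > 0 and T ∈ ℕ with T ≥ 1, and suppose that for every z ∈ Z there exists some n ∈ {1, …, T} such that PₙV(z) ≤ αⁿ·V(z) + C. Then the measurable function W := min_{1 ≤ n ≤ T} α^{−n}·PₙV satisfies the drift condition P₁W(z) ≤ α·W(z) + α^{−T}·C for every z ∈ Z. -/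

import Mathlib

open MeasureTheory ProbabilityTheory ENNReal

/-- **Drift condition from finitely many waiting times.**
Let `P` be a Markov transition kernel on a measurable space `Z`, with `Pn n` its `n`-step
iterate.  Let `V : Z → [1,∞]` be measurable, `α ∈ (0,1)`, `C > 0`, `T ≥ 1`, and suppose that
for every `z` there is some `n ∈ {1,…,T}` with `Pₙ V (z) ≤ αⁿ V(z) + C`.  Then
`W := min_{1 ≤ n ≤ T} α^{-n} Pₙ V` satisfies `P₁ W ≤ α W + α^{-T} C`. -/
theorem drift_from_finitely_many_waiting_times
    {Z : Type*} [MeasurableSpace Z]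
    (P : Kernel Z Z) [IsMarkovKernel P]
    (Pn : ℕ → Kernel Z Z)
    (hPn1 : Pn 1 = P)
    (hPns : ∀ n, 1 ≤ n → Pn (n + 1) = (Pn n).comp P)
    (V : Z → ℝ≥0∞) (hVmeas : Measurable V) (hV1 : ∀ z, 1 ≤ V z)
    (α : ℝ≥0∞) (hα0 : 0 < α) (hα1 : α < 1)
    (C : ℝ≥0∞) (hC0 : 0 < C) (hCtop : C ≠ ⊤)
    (T : ℕ) (hT : 1 ≤ T)
    (hdrift : ∀ z, ∃ n ∈ Finset.Icc 1 T,
      (∫⁻ y, V y ∂(Pn n z)) ≤ α ^ n * V z + C) :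
    ∀ z, (∫⁻ y, ⨅ n ∈ Finset.Icc 1 T, α⁻¹ ^ n * ∫⁻ w, V w ∂(Pn n y) ∂(P z))
      ≤ α * (⨅ n ∈ Finset.Icc 1 T, α⁻¹ ^ n * ∫⁻ w, V w ∂(Pn n z)) + α⁻¹ ^ T * C := by
  intro z
  set s : Finset ℕ := Finset.Icc 1 T with hs
  set g : ℕ → Z → ℝ≥0∞ := fun n y => α⁻¹ ^ n * ∫⁻ w, V w ∂(Pn n y) with hg
  have hαtop : α ≠ ⊤ := (hα1.trans ENNReal.one_lt_top).ne
  have hinvtop : α⁻¹ ≠ ⊤ := ENNReal.inv_ne_top.mpr hα0.ne'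
  have hcancel : α * α⁻¹ = 1 := ENNReal.mul_inv_cancel hα0.ne' hαtop
  have hinv1 : 1 ≤ α⁻¹ := ENNReal.one_le_inv.mpr hα1.le
  have hsne : s.Nonempty := ⟨1, by simp [hs, hT]⟩
  -- pointwise bound : W y ≤ V y + α⁻¹ ^ T * C
  have hW_le : ∀ y, (⨅ n ∈ s, g n y) ≤ V y + α⁻¹ ^ T * C := by
    intro y
    obtain ⟨n, hn, hle⟩ := hdrift y
    have hnT : n ≤ T := (Finset.mem_Icc.mp hn).2
    calc (⨅ n ∈ s, g n y) ≤ g n y := biInf_le _ hn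
      _ ≤ α⁻¹ ^ n * (α ^ n * V y + C) := mul_le_mul_right hle _
      _ = (α⁻¹ * α) ^ n * V y + α⁻¹ ^ n * C := by
          rw [mul_add, ← mul_assoc, ← mul_pow]
      _ ≤ V y + α⁻¹ ^ T * C := by
          rw [ENNReal.inv_mul_cancel hα0.ne' hαtop, one_pow, one_mul]
          exact add_le_add_right (mul_le_mul_left (pow_le_pow_right₀ hinv1 hnT) _) _
  -- the infimum over the Finset is attained
  obtain ⟨m, hm, hmin⟩ := Finset.exists_mem_eq_inf s hsne (fun n => g n z)
  have hWz : (⨅ n ∈ s, g n z) = g m z := by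
    rw [← Finset.inf_eq_iInf]; exact hmin
  obtain ⟨hm1, hmT⟩ := Finset.mem_Icc.mp hm
  rcases eq_or_lt_of_le hm1 with hm1 | hm2
  · -- m = 1
    have hm1' : m = 1 := hm1.symm
    calc (∫⁻ y, ⨅ n ∈ s, g n y ∂(P z))
        ≤ ∫⁻ y, V y + α⁻¹ ^ T * C ∂(P z) := lintegral_mono hW_le
      _ = (∫⁻ y, V y ∂(P z)) + α⁻¹ ^ T * C := by
          rw [lintegral_add_right _ measurable_const, lintegral_const,
            measure_univ, mul_one]
      _ = α * g m z + α⁻¹ ^ T * C := by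
          rw [hm1', hg]; simp only [pow_one, ← mul_assoc, hcancel, one_mul, hPn1]
      _ = α * (⨅ n ∈ s, g n z) + α⁻¹ ^ T * C := by rw [hWz]
  · -- m ≥ 2
    obtain ⟨k, rfl⟩ : ∃ k, m = k + 1 := ⟨m - 1, by omega⟩
    have hk1 : 1 ≤ k := by omega
    have hcomp : Pn (k + 1) = (Pn k).comp P := hPns k hk1
    calc (∫⁻ y, ⨅ n ∈ s, g n y ∂(P z))
        ≤ ∫⁻ y, g k y ∂(P z) := by
          refine lintegral_mono fun y => ?_
          exact biInf_le _ (Finset.mem_Icc.mpr ⟨hk1, by omega⟩)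
      _ = α⁻¹ ^ k * ∫⁻ y, ∫⁻ w, V w ∂(Pn k y) ∂(P z) := by
          rw [hg]; exact lintegral_const_mul' _ _ (pow_ne_top hinvtop)
      _ = α⁻¹ ^ k * ∫⁻ w, V w ∂(Pn (k + 1) z) := by
          rw [hcomp, Kernel.lintegral_comp _ _ _ hVmeas]
      _ = α * g (k + 1) z := by
          show _ = α * (α⁻¹ ^ (k + 1) * _)
          rw [pow_succ', ← mul_assoc, ← mul_assoc, hcancel, one_mul]
      _ ≤ α * (⨅ n ∈ s, g n z) + α⁻¹ ^ T * C := by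
          rw [hWz]; exact le_self_add
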